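/- Let a > 0 and r > 0, and let γ(a, r) be the Gamma distribution on ℝ with shape a and rate r, i.e., with density x ↦ (r^a/Γ(a))·x^{a−1}·e^{−rx} on x ≥ 0 (and 0 for x < 0). Then the characteristic function of γ(a, r) is φ(t) = (1 − i·t/r)^{−a} for all t ∈ ℝ, where the power is taken via the principal branch. -/

import Mathlib

open MeasureTheory ProbabilityTheory Complex
open Set Filter
open scoped NNReal ENNReal

lemma integrableOn_cpow_mul_exp {s : ℂ} (hs : 0 < s.re) {b : ℂ} (hb : 0 < b.re) :
    IntegrableOn (fun x : ℝ ↦ (x : ℂ) ^ (s - 1) * Complex.exp (-(b * x))) (Ioi 0) := by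
  have hmeas : AEStronglyMeasurable (fun x : ℝ ↦ (x : ℂ) ^ (s - 1) * Complex.exp (-(b * x)))
      (volume.restrict (Ioi 0)) := by
    apply ContinuousOn.aestronglyMeasurable _ measurableSet_Ioi
    apply ContinuousOn.mul
    · exact fun x hx ↦ (continuousAt_ofReal_cpow_const _ _ (Or.inr (ne_of_gt hx))).continuousWithinAt
    · fun_prop
  have hint : IntegrableOn (fun x : ℝ ↦ x ^ (s.re - 1) * Real.exp (-b.re * x)) (Ioi 0) := by
    have := integrableOn_rpow_mul_exp_neg_mul_rpow (by linarith : (-1:ℝ) < s.re - 1)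
      one_pos hb
    simpa [Real.rpow_one] using this
  refine hint.integrable.mono' hmeas ?_
  filter_upwards [ae_restrict_mem measurableSet_Ioi] with x hx
  rw [norm_mul,
    Complex.norm_cpow_eq_rpow_re_of_pos hx, Complex.norm_exp]
  simp only [sub_re, one_re, neg_re, mul_re, ofReal_re, ofReal_im, mul_zero, sub_zero]
  rw [neg_mul]

lemma integral_cpow_mul_exp_neg_mul_Ioi_cplx {s : ℂ} (hs : 0 < s.re) {b : ℂ} (hb : 0 < b.re) :
    ∫ x : ℝ in Ioi 0, (x : ℂ) ^ (s - 1) * Complex.exp (-(b * x)) =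
      (1 / b) ^ s * Complex.Gamma s := by
  set U : Set ℂ := {z : ℂ | 0 < z.re} with hU_def
  have hU : IsOpen U := isOpen_lt continuous_const continuous_re
  set F : ℂ → ℂ := fun z ↦ ∫ x : ℝ in Ioi 0, (x : ℂ) ^ (s - 1) * Complex.exp (-(z * x)) with hF
  set G : ℂ → ℂ := fun z ↦ (1 / z) ^ s * Complex.Gamma s with hG
  have hFd : DifferentiableOn ℂ F U := by
    intro z₀ hz₀
    have hz₀' : 0 < z₀.re := hz₀
    have hdF : HasDerivAt F
        (∫ x : ℝ in Ioi 0, (x : ℂ) ^ (s - 1) * (-x * Complex.exp (-(z₀ * x)))) z₀ := by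
      have ε_pos : 0 < z₀.re / 2 := by linarith
      have key := hasDerivAt_integral_of_dominated_loc_of_deriv_le
        (μ := volume.restrict (Ioi 0))
        (F := fun z (x : ℝ) ↦ (x : ℂ) ^ (s - 1) * Complex.exp (-(z * x)))
        (F' := fun z (x : ℝ) ↦ (x : ℂ) ^ (s - 1) * (-x * Complex.exp (-(z * x))))
        (x₀ := z₀) (bound := fun x : ℝ ↦ x ^ s.re * Real.exp (-(z₀.re / 2) * x))
        (Metric.ball_mem_nhds z₀ ε_pos) ?hmeas ?hint ?hmeas' ?hbound ?hbint ?hdiff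
      · exact key.2
      case hmeas =>
        filter_upwards with z
        apply ContinuousOn.aestronglyMeasurable _ measurableSet_Ioi
        apply ContinuousOn.mul
        · exact fun x hx ↦
            (continuousAt_ofReal_cpow_const _ _ (Or.inr (ne_of_gt hx))).continuousWithinAt
        · fun_prop
      case hint => exact integrableOn_cpow_mul_exp hs hz₀'
      case hmeas' =>
        apply ContinuousOn.aestronglyMeasurable _ measurableSet_Ioi
        apply ContinuousOn.mul
        · exact fun x hx ↦
            (continuousAt_ofReal_cpow_const _ _ (Or.inr (ne_of_gt hx))).continuousWithinAt
        · fun_prop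
      case hbound =>
        filter_upwards [ae_restrict_mem measurableSet_Ioi] with x hx z hz
        have hzre : z₀.re / 2 ≤ z.re := by
          have := abs_re_le_norm (z - z₀)
          have hd : ‖z - z₀‖ < z₀.re / 2 := by
            simpa [Complex.dist_eq] using hz
          have := abs_le.mp (le_trans (abs_re_le_norm (z - z₀)) hd.le)
          simp only [sub_re] at this
          linarith [this.1]
        rw [norm_mul, norm_mul,
          Complex.norm_cpow_eq_rpow_re_of_pos hx, Complex.norm_exp]
        simp only [sub_re, one_re, neg_re, mul_re, ofReal_re, ofReal_im, mul_zero, sub_zero,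
          norm_neg, Complex.norm_real, Real.norm_eq_abs, abs_of_pos (show (0:ℝ) < x from hx)]
        have h1 : x ^ (s.re - 1) * (x * Real.exp (-(z.re * x))) =
            x ^ s.re * Real.exp (-(z.re * x)) := by
          rw [← mul_assoc, ← Real.rpow_add_one (ne_of_gt hx)]
          ring_nf
        rw [h1]
        gcongr
        · exact Real.rpow_nonneg hx.le _
        · rw [neg_mul, neg_le_neg_iff]
          exact mul_le_mul_of_nonneg_right hzre hx.le
      case hbint =>
        have := integrableOn_rpow_mul_exp_neg_mul_rpow (by linarith : (-1:ℝ) < s.re)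
          one_pos ε_pos
        simpa [Real.rpow_one, IntegrableOn] using this
      case hdiff =>
        filter_upwards [ae_restrict_mem measurableSet_Ioi] with x _ z _
        have h1 : HasDerivAt (fun z : ℂ ↦ -(z * (x : ℂ))) (-(x : ℂ)) z := by
          exact ((hasDerivAt_id z).mul_const (x : ℂ)).neg.congr_deriv (by simp)
        have h2 := h1.cexp
        simpa [mul_comm] using (h2.const_mul ((x : ℂ) ^ (s - 1)))
    exact hdF.differentiableAt.differentiableWithinAt
  have hGd : DifferentiableOn ℂ G U := by
    intro z hz
    have hz' : 0 < z.re := hz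
    have hzne : z ≠ 0 := by
      intro h; rw [h] at hz'; simp at hz'
    apply DifferentiableAt.differentiableWithinAt
    apply DifferentiableAt.mul_const
    apply DifferentiableAt.cpow
    · exact (differentiableAt_const 1).div differentiableAt_id hzne
    · exact differentiableAt_const s
    · left
      rw [one_div, inv_re]
      exact div_pos hz' (Complex.normSq_pos.mpr hzne)
  have hFa : AnalyticOnNhd ℂ F U := hFd.analyticOnNhd hU
  have hGa : AnalyticOnNhd ℂ G U := hGd.analyticOnNhd hU
  have hpre : IsPreconnected U := (convex_halfSpace_re_gt 0).isPreconnected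
  have h1U : (1 : ℂ) ∈ U := by simp [hU_def]
  have hfreq : ∃ᶠ z in nhdsWithin 1 {(1:ℂ)}ᶜ, F z = G z := by
    have htend : Tendsto (fun n : ℕ ↦ (1 + (n+1 : ℝ)⁻¹ : ℂ)) atTop (nhdsWithin 1 {(1:ℂ)}ᶜ) := by
      rw [tendsto_nhdsWithin_iff]
      constructor
      · have : Tendsto (fun n : ℕ ↦ ((n:ℝ)+1)⁻¹) atTop (nhds 0) := by
          exact_mod_cast (tendsto_one_div_add_atTop_nhds_zero_nat (𝕜 := ℝ)).congr (by simp [one_div])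
        have := ((continuous_ofReal.tendsto 0).comp this).const_add (1 : ℂ)
        simpa using this
      · filter_upwards with n
        simp only [Set.mem_compl_iff, Set.mem_singleton_iff]
        intro h
        have h0 : (((n:ℝ) + 1)⁻¹ : ℝ) = 0 :=
          Complex.ofReal_eq_zero.mp (add_eq_left.mp h)
        rw [inv_eq_zero] at h0
        have : (0:ℝ) < (n:ℝ) + 1 := by positivity
        linarith
    apply htend.frequently
    apply Filter.Frequently.of_forall
    intro n
    have hc : (0:ℝ) < 1 + ((n:ℝ)+1)⁻¹ := by positivity
    have := Complex.integral_cpow_mul_exp_neg_mul_Ioi hs hc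
    simp only [hF, hG]
    push_cast at this ⊢
    exact this
  have heq := hFa.eqOn_of_preconnected_of_frequently_eq hGa hpre h1U hfreq
  exact heq hb

/-- The characteristic function of the Gamma distribution with shape `a > 0` and rate
`r > 0` is `t ↦ (1 − i·t/r)^{−a}`, the power taken via the principal branch. -/
theorem charFun_gammaMeasure (a r : ℝ) (ha : 0 < a) (hr : 0 < r) (t : ℝ) :
    ∫ x, Complex.exp (Complex.I * t * x) ∂(gammaMeasure a r) =
      (1 - Complex.I * t / r) ^ (-(a : ℂ)) := by
  set b : ℂ := (r : ℂ) - Complex.I * t with hb_def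
  have hbre : 0 < b.re := by simp [hb_def, hr]
  have hbne : b ≠ 0 := fun h ↦ by simp [h] at hbre
  have hrne : (r : ℂ) ≠ 0 := ofReal_ne_zero.mpr hr.ne'
  have hmeq : gammaMeasure a r
      = volume.withDensity (fun x ↦ (((gammaPDFReal a r x).toNNReal : ℝ≥0) : ℝ≥0∞)) := rfl
  rw [hmeq, integral_withDensity_eq_integral_smul (measurable_gammaPDFReal a r).real_toNNReal]
  have hind : (fun x : ℝ ↦ (gammaPDFReal a r x).toNNReal • Complex.exp (Complex.I * t * x))
      =ᵐ[volume] (Ioi 0).indicator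
        (fun x : ℝ ↦ (gammaPDFReal a r x).toNNReal • Complex.exp (Complex.I * t * x)) := by
    have h0 : ({0} : Set ℝ)ᶜ ∈ ae (volume : Measure ℝ) := by
      rw [mem_ae_iff]; simp
    filter_upwards [h0] with x hx
    rcases lt_trichotomy x 0 with h | h | h
    · rw [indicator_of_notMem (by simp [not_lt.mpr h.le])]
      simp [gammaPDFReal, not_le.mpr h]
    · exact absurd h hx
    · rw [indicator_of_mem (mem_Ioi.mpr h)]
  rw [integral_congr_ae hind, integral_indicator measurableSet_Ioi]
  have hcongr : ∀ x ∈ Ioi (0:ℝ),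
      (gammaPDFReal a r x).toNNReal • Complex.exp (Complex.I * t * x)
        = ((r ^ a / Real.Gamma a : ℝ) : ℂ) * ((x : ℂ) ^ ((a : ℂ) - 1)
            * Complex.exp (-(b * x))) := by
    intro x hx
    rw [mem_Ioi] at hx
    have hnn : 0 ≤ gammaPDFReal a r x := gammaPDFReal_nonneg ha hr x
    rw [NNReal.smul_def, Real.coe_toNNReal _ hnn, real_smul]
    rw [gammaPDFReal, if_pos hx.le]
    push_cast
    rw [Complex.ofReal_cpow hx.le]
    push_cast
    have hexp : Complex.exp (-(↑r * ↑x)) * Complex.exp (Complex.I * ↑t * ↑x)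
        = Complex.exp (-(b * ↑x)) := by
      rw [← Complex.exp_add]
      congr 1
      rw [hb_def]
      ring
    rw [mul_assoc, hexp]
    ring
  rw [setIntegral_congr_fun measurableSet_Ioi hcongr, integral_const_mul,
    integral_cpow_mul_exp_neg_mul_Ioi_cplx (by simpa using ha) hbre]
  -- now pure algebra
  have harg : b.arg ≠ Real.pi := by
    intro h
    have := Complex.arg_eq_pi_iff.mp h
    linarith [this.1, hbre]
  have h1 : (1 : ℂ) - Complex.I * t / r = b / r := by
    field_simp [hb_def]
    exact hb_def.symm
  rw [h1, Complex.Gamma_ofReal]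
  have hΓ : (Real.Gamma a : ℂ) ≠ 0 := ofReal_ne_zero.mpr (Real.Gamma_pos_of_pos ha).ne'
  rw [Complex.ofReal_div, Complex.ofReal_cpow hr.le]
  have hcancel : (r:ℂ) ^ (a:ℂ) / (Real.Gamma a : ℂ) * ((1 / b) ^ (a:ℂ) * (Real.Gamma a : ℂ))
      = (r:ℂ) ^ (a:ℂ) * (1 / b) ^ (a:ℂ) := by
    field_simp
  rw [hcancel]
  rw [cpow_def_of_ne_zero (one_div_ne_zero hbne), cpow_def_of_ne_zero hrne,
    cpow_def_of_ne_zero (div_ne_zero hbne hrne), ← Complex.exp_add]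
  rw [one_div, Complex.log_inv _ harg]
  rw [div_eq_mul_inv b (r:ℂ), ← Complex.ofReal_inv,
    Complex.log_mul_ofReal r⁻¹ (inv_pos.mpr hr) b hbne, Real.log_inv]
  rw [← Complex.ofReal_log hr.le]
  push_cast
  ring_nf
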